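/- Let E₁ ∈ ℝ^{d''×d} and E₂ ∈ ℝ^{d'×d''} be column-stochastic matrices each with all entries positive. Then the composition E₂E₁ ∈ ℝ^{d'×d} has all entries positive; consequently, for every pair of probability vectors p ∈ Δ^{d-1} and q ∈ Δ^{d'-1} there exists a prior γ ∈ Δ^{d-1} with (E₂E₁)γ entrywise positive such that the Bayes map of E₂E₁ based on γ sends q to p. -/

import Mathlib

open Matrix BigOperators

/-- A column-stochastic matrix: nonnegative entries, each column sums to 1. -/
def ColStochastic {d' d : ℕ} (E : Matrix (Fin d') (Fin d) ℝ) : Prop :=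
  (∀ y x, 0 ≤ E y x) ∧ ∀ x, ∑ y, E y x = 1

/-- A probability vector: nonnegative entries summing to 1. -/
def ProbVec {d : ℕ} (p : Fin d → ℝ) : Prop :=
  (∀ x, 0 ≤ p x) ∧ ∑ x, p x = 1

/-- The Bayes map `Ê_γ = D_γ Eᵀ D_{Eγ}⁻¹`, entrywise `(Ê_γ)_{x,y} = E_{y,x} γ_x / (Eγ)_y`. -/
noncomputable def bayesMap {d' d : ℕ} (E : Matrix (Fin d') (Fin d) ℝ) (γ : Fin d → ℝ) :
    Matrix (Fin d) (Fin d') ℝ :=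
  Matrix.of fun x y => E y x * γ x / (E *ᵥ γ) y

lemma aux_mulVec_pos {m n : ℕ} (E : Matrix (Fin m) (Fin n) ℝ)
    (hpos : ∀ y x, 0 < E y x) (γ : Fin n → ℝ) (h0 : ∀ x, 0 ≤ γ x) (h1 : ∑ x, γ x = 1)
    (y : Fin m) : 0 < (E *ᵥ γ) y := by
  have hne : ∃ x, 0 < γ x := by
    by_contra h
    push_neg at h
    have : ∑ x, γ x = 0 := le_antisymm (Finset.sum_nonpos (fun x _ => h x))
      (Finset.sum_nonneg (fun x _ => h0 x))
    rw [h1] at this; norm_num at this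
  obtain ⟨x0, hx0⟩ := hne
  unfold Matrix.mulVec dotProduct
  apply Finset.sum_pos'
  · exact fun i _ => mul_nonneg (hpos y i).le (h0 i)
  · exact ⟨x0, Finset.mem_univ _, mul_pos (hpos y x0) hx0⟩

lemma aux_simplex_compact {n : ℕ} :
    IsCompact {γ : Fin n → ℝ | (∀ x, 0 ≤ γ x) ∧ ∑ x, γ x = 1} := by
  have hsub : {γ : Fin n → ℝ | (∀ x, 0 ≤ γ x) ∧ ∑ x, γ x = 1} ⊆ Set.Icc 0 1 := by
    rintro γ ⟨h0, h1⟩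
    constructor
    · intro x; exact h0 x
    · intro x
      calc γ x = ∑ y ∈ {x}, γ y := by simp
        _ ≤ ∑ y, γ y := Finset.sum_le_sum_of_subset_of_nonneg (Finset.subset_univ _)
            (fun i _ _ => h0 i)
        _ = 1 := h1
  have hclosed : IsClosed {γ : Fin n → ℝ | (∀ x, 0 ≤ γ x) ∧ ∑ x, γ x = 1} := by
    have : {γ : Fin n → ℝ | (∀ x, 0 ≤ γ x) ∧ ∑ x, γ x = 1}
        = (⋂ x, {γ : Fin n → ℝ | 0 ≤ γ x}) ∩ {γ | ∑ x, γ x = 1} := by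
      ext γ; simp [Set.mem_iInter]
    rw [this]
    refine IsClosed.inter (isClosed_iInter fun x => ?_) ?_
    · exact isClosed_le continuous_const (continuous_apply x)
    · exact isClosed_eq (by continuity) continuous_const
  exact isCompact_Icc.of_isClosed_subset hclosed hsub

lemma key {m n : ℕ} (E : Matrix (Fin m) (Fin n) ℝ) (hE : ColStochastic E)
    (hpos : ∀ y x, 0 < E y x) (p : Fin n → ℝ) (q : Fin m → ℝ)
    (hp : ProbVec p) (hq : ProbVec q) :
    ∃ γ : Fin n → ℝ, ProbVec γ ∧ (∀ y, 0 < (E *ᵥ γ) y) ∧ bayesMap E γ *ᵥ q = p := by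
  have hn : 0 < n := by
    rcases Nat.eq_zero_or_pos n with h | h
    · exfalso; subst h; have := hp.2; simp at this
    · exact h
  set Δ : Set (Fin n → ℝ) := {γ : Fin n → ℝ | (∀ x, 0 ≤ γ x) ∧ ∑ x, γ x = 1} with hΔ
  have hΔne : Δ.Nonempty := by
    refine ⟨fun _ => 1 / n, fun x => by positivity, ?_⟩
    simp [Finset.sum_const]
    field_simp
  set H : (Fin n → ℝ) → ℝ := fun γ =>
    (∏ x, γ x ^ p x) * ∏ y, ((E *ᵥ γ) y) ^ (-(q y)) with hH
  have hHcont : ContinuousOn H Δ := by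
    apply ContinuousOn.mul
    · apply continuousOn_finset_prod
      intro x _ γ hγ
      exact ((continuous_apply x).continuousAt.rpow_const (Or.inr (hp.1 x))).continuousWithinAt
    · apply continuousOn_finset_prod
      intro y _ γ hγ
      have hc : Continuous fun γ : Fin n → ℝ => (E *ᵥ γ) y := by
        simp only [Matrix.mulVec, dotProduct]
        exact continuous_finset_sum _ fun i _ => (continuous_const.mul (continuous_apply i))
      exact (hc.continuousAt.rpow_const
        (Or.inl (aux_mulVec_pos E hpos γ hγ.1 hγ.2 y).ne')).continuousWithinAt
  obtain ⟨γ, hγΔ, hmax⟩ := aux_simplex_compact.exists_isMaxOn hΔne hHcont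
  have hγ0 : ∀ x, 0 ≤ γ x := hγΔ.1
  have hγ1 : ∑ x, γ x = 1 := hγΔ.2
  have hEγ : ∀ y, 0 < (E *ᵥ γ) y := aux_mulVec_pos E hpos γ hγ0 hγ1
  -- H positive on Δ pointwise when all needed bases positive; in particular at maximizer
  have hHpos : ∀ v ∈ Δ, (∀ z, 0 < p z → 0 < v z) → 0 < H v := by
    intro v hv hvp
    apply mul_pos
    · apply Finset.prod_pos
      intro z _
      rcases lt_or_eq_of_le (hp.1 z) with h | h
      · exact Real.rpow_pos_of_pos (hvp z h) _
      · rcases lt_or_eq_of_le (hv.1 z) with h2 | h2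
        · exact Real.rpow_pos_of_pos h2 _
        · rw [← h2, ← h]; norm_num
    · exact Finset.prod_pos fun y _ =>
        Real.rpow_pos_of_pos (aux_mulVec_pos E hpos v hv.1 hv.2 y) _
  have hHγpos : 0 < H γ := by
    have hu : (fun _ : Fin n => (1:ℝ) / n) ∈ Δ := by
      refine ⟨fun x => by positivity, ?_⟩
      simp [Finset.sum_const]
      field_simp
    have h1 : 0 < H (fun _ : Fin n => (1:ℝ) / n) := by
      refine hHpos _ hu fun z _ => by positivity
    exact lt_of_lt_of_le h1 (hmax hu)
  have hsupp : ∀ z, 0 < p z → 0 < γ z := by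
    intro z hz
    by_contra h
    push_neg at h
    have hz0 : γ z = 0 := le_antisymm h (hγ0 z)
    have : H γ = 0 := by
      rw [hH]
      simp only
      rw [Finset.prod_eq_zero (Finset.mem_univ z), zero_mul]
      rw [hz0, Real.zero_rpow hz.ne']
    linarith [hHγpos, this]
  refine ⟨γ, ⟨hγ0, hγ1⟩, hEγ, ?_⟩
  set S : Fin n → ℝ := fun x => ∑ y, q y * (E y x / (E *ᵥ γ) y) with hS
  set c : Fin n → ℝ := fun x => p x / γ x - S x with hc
  have hclaim1 : ∀ x x', 0 < γ x → 0 < γ x' → c x = c x' := by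
    intro x x' hgx hgx'
    by_cases hxx : x = x'
    · rw [hxx]
    set δ : Fin n → ℝ := fun z => if z = x then 1 else if z = x' then -1 else 0 with hδ
    set w : Fin m → ℝ := E *ᵥ δ with hw
    set ε : ℝ := min (γ x) (γ x') with hε
    have hε0 : 0 < ε := lt_min hgx hgx'
    have hxx' : ¬ x' = x := fun h => hxx h.symm
    have hδsum : ∑ z, δ z = 0 := by
      have h : ∀ z, δ z = (if z = x then (1:ℝ) else 0) + (if z = x' then -1 else 0) := by
        intro z
        rw [hδ]
        by_cases h1 : z = x
        · simp [h1, hxx]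
        · by_cases h2 : z = x' <;> simp [h1, h2, hxx']
      rw [Finset.sum_congr rfl (fun z _ => h z), Finset.sum_add_distrib]
      rw [Finset.sum_ite_eq' Finset.univ x, Finset.sum_ite_eq' Finset.univ x']
      simp
    -- the perturbed vector stays in the simplex
    have hvmem : ∀ t ∈ Set.Ioo (-ε) ε, (fun z => γ z + t * δ z) ∈ Δ := by
      intro t ht
      constructor
      · intro z
        show 0 ≤ γ z + t * δ z
        by_cases h1 : z = x
        · have h3 : -ε < t := ht.1
          have hεle : ε ≤ γ x := min_le_left (γ x) (γ x')
          have hval : δ z = 1 := by rw [hδ]; simp [h1]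
          rw [hval, mul_one, h1]; linarith
        · by_cases h2 : z = x'
          · have h3 : t < ε := ht.2
            have hεle : ε ≤ γ x' := min_le_right (γ x) (γ x')
            have hval : δ z = -1 := by rw [hδ]; simp [h1, h2, hxx']
            rw [hval, h2]; linarith
          · have hval : δ z = 0 := by rw [hδ]; simp [h1, h2]
            rw [hval, mul_zero, add_zero]; exact hγ0 z
      · rw [Finset.sum_add_distrib, hγ1, ← Finset.mul_sum, hδsum, mul_zero, add_zero]
    -- positivity of perturbed coordinates on the support of p
    have hvposp : ∀ t ∈ Set.Ioo (-ε) ε, ∀ z, 0 < p z → 0 < γ z + t * δ z := by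
      intro t ht z hpz
      by_cases h1 : z = x
      · have hεle : ε ≤ γ x := min_le_left (γ x) (γ x')
        have h3 : -ε < t := ht.1
        have hval : δ z = 1 := by rw [hδ]; simp [h1]
        rw [hval, mul_one, h1]; linarith
      · by_cases h2 : z = x'
        · have hεle : ε ≤ γ x' := min_le_right (γ x) (γ x')
          have h3 : t < ε := ht.2
          have hval : δ z = -1 := by rw [hδ]; simp [h1, h2, hxx']
          rw [hval, h2]; linarith
        · have hval : δ z = 0 := by rw [hδ]; simp [h1, h2]
          rw [hval, mul_zero, add_zero]; exact hsupp z hpz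
    have hvE : ∀ t, (fun z => γ z + t * δ z) = γ + t • δ := by
      intro t; funext z; simp [mul_comm]
    have hvEpos : ∀ t ∈ Set.Ioo (-ε) ε, ∀ y, 0 < (E *ᵥ γ) y + t * w y := by
      intro t ht y
      have := aux_mulVec_pos E hpos _ (hvmem t ht).1 (hvmem t ht).2 y
      rwa [hvE t, Matrix.mulVec_add, Matrix.mulVec_smul, Pi.add_apply, Pi.smul_apply,
        smul_eq_mul, ← hw] at this
    set φ : ℝ → ℝ := fun t =>
      (∑ z, p z * Real.log (γ z + t * δ z)) - ∑ y, q y * Real.log ((E *ᵥ γ) y + t * w y)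
      with hφ
    have hφlog : ∀ t ∈ Set.Ioo (-ε) ε, φ t = Real.log (H (fun z => γ z + t * δ z)) := by
      intro t ht
      have hbase : ∀ z : Fin n, (γ z + t * δ z ≠ 0) ∨ p z = 0 := by
        intro z
        rcases lt_or_eq_of_le (hp.1 z) with h | h
        · exact Or.inl (hvposp t ht z h).ne'
        · exact Or.inr h.symm
      have h1 : ∀ z : Fin n, Real.log ((γ z + t * δ z) ^ p z) = p z * Real.log (γ z + t * δ z)
          ∧ (γ z + t * δ z) ^ p z ≠ 0 := by
        intro z
        rcases hbase z with h | h
        · rcases lt_or_eq_of_le ((hvmem t ht).1 z) with h2 | h2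
          · exact ⟨Real.log_rpow h2 _, (Real.rpow_pos_of_pos h2 _).ne'⟩
          · exact absurd h2.symm h
        · rw [h, Real.rpow_zero]
          exact ⟨by simp, one_ne_zero⟩
      have h2 : ∀ y : Fin m,
          Real.log (((E *ᵥ fun z => γ z + t * δ z) y) ^ (-(q y)))
            = -(q y * Real.log ((E *ᵥ γ) y + t * w y))
          ∧ ((E *ᵥ fun z => γ z + t * δ z) y) ^ (-(q y)) ≠ 0 := by
        intro y
        have hb : (E *ᵥ fun z => γ z + t * δ z) y = (E *ᵥ γ) y + t * w y := by
          rw [hvE t, Matrix.mulVec_add, Matrix.mulVec_smul, Pi.add_apply, Pi.smul_apply,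
            smul_eq_mul, ← hw]
        rw [hb]
        refine ⟨?_, (Real.rpow_pos_of_pos (hvEpos t ht y) _).ne'⟩
        rw [Real.log_rpow (hvEpos t ht y)]; ring
      rw [hH]; simp only
      rw [Real.log_mul (Finset.prod_ne_zero_iff.mpr fun z _ => (h1 z).2)
        (Finset.prod_ne_zero_iff.mpr fun y _ => (h2 y).2),
        Real.log_prod (fun z _ => (h1 z).2), Real.log_prod (fun y _ => (h2 y).2),
        Finset.sum_congr rfl (fun z _ => (h1 z).1), Finset.sum_congr rfl (fun y _ => (h2 y).1)]
      rw [hφ]; simp only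
      rw [Finset.sum_neg_distrib]
      ring
    have hlocmax : IsLocalMax φ 0 := by
      have hmem : Set.Ioo (-ε) ε ∈ nhds (0:ℝ) := Ioo_mem_nhds (by linarith) hε0
      filter_upwards [hmem] with t ht
      have h0mem : (0:ℝ) ∈ Set.Ioo (-ε) ε := by constructor <;> simp [hε0] <;> linarith
      rw [hφlog t ht, hφlog 0 h0mem]
      have hv0 : (fun z => γ z + 0 * δ z) = γ := by funext z; ring_nf
      rw [hv0]
      have hpos1 : 0 < H (fun z => γ z + t * δ z) :=
        hHpos _ (hvmem t ht) (hvposp t ht)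
      exact Real.log_le_log hpos1 (hmax (hvmem t ht))
    -- derivative of φ at 0
    have hA : HasDerivAt (fun t => ∑ z, p z * Real.log (γ z + t * δ z))
        (∑ z, p z * (1 * δ z / (γ z + 0 * δ z))) 0 := by
      apply HasDerivAt.fun_sum
      intro z _
      by_cases hpz : p z = 0
      · rw [hpz]; simp only [zero_mul]; exact hasDerivAt_const 0 0
      · have hγz : 0 < γ z := hsupp z (lt_of_le_of_ne (hp.1 z) (Ne.symm hpz))
        have hinner : HasDerivAt (fun t : ℝ => γ z + t * δ z) (1 * δ z) 0 :=
          ((hasDerivAt_id 0).mul_const (δ z)).const_add (γ z)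
        have hne : γ z + 0 * δ z ≠ 0 := by simpa using hγz.ne'
        exact (hinner.log hne).const_mul (p z)
    have hB : HasDerivAt (fun t => ∑ y, q y * Real.log ((E *ᵥ γ) y + t * w y))
        (∑ y, q y * (1 * w y / ((E *ᵥ γ) y + 0 * w y))) 0 := by
      apply HasDerivAt.fun_sum
      intro y _
      have hinner : HasDerivAt (fun t : ℝ => (E *ᵥ γ) y + t * w y) (1 * w y) 0 :=
        ((hasDerivAt_id 0).mul_const (w y)).const_add ((E *ᵥ γ) y)
      have hne : (E *ᵥ γ) y + 0 * w y ≠ 0 := by simpa using (hEγ y).ne'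
      exact (hinner.log hne).const_mul (q y)
    have hD : HasDerivAt φ
        ((∑ z, p z * (1 * δ z / (γ z + 0 * δ z)))
          - ∑ y, q y * (1 * w y / ((E *ᵥ γ) y + 0 * w y))) 0 := hA.sub hB
    have hzero := hlocmax.hasDerivAt_eq_zero hD
    -- identify the derivative with c x - c x'
    have hwy : ∀ y, w y = E y x - E y x' := by
      intro y
      rw [hw, hδ]
      simp only [Matrix.mulVec, dotProduct]
      have h : ∀ z, E y z * (if z = x then (1:ℝ) else if z = x' then -1 else 0)
          = (if z = x then E y x else 0) - (if z = x' then E y x' else 0) := by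
        intro z
        by_cases h1 : z = x
        · subst h1; simp [hxx, div_eq_mul_inv]
        · by_cases h2 : z = x'
          · subst h2; simp [h1]
          · simp [h1, h2]
      rw [Finset.sum_congr rfl (fun z _ => h z), Finset.sum_sub_distrib]
      rw [Finset.sum_ite_eq' Finset.univ x, Finset.sum_ite_eq' Finset.univ x']
      simp
    have e1 : ∑ z, p z * (1 * δ z / (γ z + 0 * δ z)) = p x / γ x - p x' / γ x' := by
      have h : ∀ z, p z * (1 * δ z / (γ z + 0 * δ z))
          = (if z = x then p x / γ x else 0) - (if z = x' then p x' / γ x' else 0) := by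
        intro z
        rw [hδ]; simp only [one_mul, zero_mul, add_zero]
        by_cases h1 : z = x
        · subst h1; simp [hxx, div_eq_mul_inv]
        · by_cases h2 : z = x'
          · subst h2; simp [h1]; ring
          · simp [h1, h2]
      rw [Finset.sum_congr rfl (fun z _ => h z), Finset.sum_sub_distrib]
      rw [Finset.sum_ite_eq' Finset.univ x, Finset.sum_ite_eq' Finset.univ x']
      simp [div_eq_mul_inv]
    have e2 : ∑ y, q y * (1 * w y / ((E *ᵥ γ) y + 0 * w y)) = S x - S x' := by
      have h : ∀ y, q y * (1 * w y / ((E *ᵥ γ) y + 0 * w y))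
          = q y * (E y x / (E *ᵥ γ) y) - q y * (E y x' / (E *ᵥ γ) y) := by
        intro y
        rw [hwy y]
        simp only [one_mul, zero_mul, add_zero]
        ring
      rw [Finset.sum_congr rfl (fun y _ => h y), Finset.sum_sub_distrib]
    rw [e1, e2] at hzero
    rw [hc]; simp only
    linarith
  -- weighted sum of c vanishes
  have hclaim2 : ∑ x, γ x * c x = 0 := by
    have e1 : ∑ x, γ x * (p x / γ x) = 1 := by
      have h : ∀ x, γ x * (p x / γ x) = p x := by
        intro x
        by_cases hgx : γ x = 0
        · have hpx : p x = 0 := by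
            by_contra hpx
            exact absurd ((hsupp x (lt_of_le_of_ne (hp.1 x) (Ne.symm hpx)))).ne'
              (by rw [hgx]; simp)
          rw [hgx, hpx]; ring
        · field_simp
      rw [Finset.sum_congr rfl (fun x _ => h x), hp.2]
    have e2 : ∑ x, γ x * S x = 1 := by
      rw [hS]; simp only
      have h : ∀ x, γ x * ∑ y, q y * (E y x / (E *ᵥ γ) y)
          = ∑ y, q y / (E *ᵥ γ) y * (E y x * γ x) := by
        intro x
        rw [Finset.mul_sum]
        exact Finset.sum_congr rfl fun y _ => by ring
      rw [Finset.sum_congr rfl (fun x _ => h x), Finset.sum_comm]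
      have h2 : ∀ y, ∑ x, q y / (E *ᵥ γ) y * (E y x * γ x) = q y := by
        intro y
        rw [← Finset.mul_sum]
        have : ∑ x, E y x * γ x = (E *ᵥ γ) y := rfl
        rw [this, div_mul_cancel₀ _ (hEγ y).ne']
      rw [Finset.sum_congr rfl (fun y _ => h2 y), hq.2]
    calc ∑ x, γ x * c x = ∑ x, (γ x * (p x / γ x) - γ x * S x) := by
          refine Finset.sum_congr rfl fun x _ => ?_
          rw [hc]; simp only; ring
      _ = 1 - 1 := by rw [Finset.sum_sub_distrib, e1, e2]
      _ = 0 := by ring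
  -- conclude c vanishes on the support of γ
  have hsuppγ : ∃ x0, 0 < γ x0 := by
    by_contra h
    push_neg at h
    have : ∑ x, γ x = 0 := le_antisymm (Finset.sum_nonpos (fun x _ => h x))
      (Finset.sum_nonneg (fun x _ => hγ0 x))
    rw [hγ1] at this; norm_num at this
  obtain ⟨x0, hx0⟩ := hsuppγ
  have hczero : ∀ x, 0 < γ x → c x = 0 := by
    have hsum : ∑ x, γ x * c x = c x0 := by
      have h : ∀ x, γ x * c x = γ x * c x0 := by
        intro x
        rcases lt_or_eq_of_le (hγ0 x) with h | h
        · rw [hclaim1 x x0 h hx0]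
        · rw [← h]; ring
      rw [Finset.sum_congr rfl (fun x _ => h x), ← Finset.sum_mul, hγ1, one_mul]
    intro x hx
    rw [hclaim1 x x0 hx hx0]
    rw [hsum] at hclaim2
    exact hclaim2
  -- final equation
  funext x
  have hrow : (bayesMap E γ *ᵥ q) x = γ x * S x := by
    simp only [bayesMap, Matrix.mulVec, dotProduct, Matrix.of_apply, hS]
    rw [Finset.mul_sum]
    exact Finset.sum_congr rfl fun y _ => by ring
  rcases lt_or_eq_of_le (hγ0 x) with h | h
  · have := hczero x h
    rw [hc] at this; simp only at this
    have hSx : S x = p x / γ x := by linarith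
    rw [hrow, hSx]
    field_simp
  · have hpx : p x = 0 := by
      by_contra hpx
      exact absurd (hsupp x (lt_of_le_of_ne (hp.1 x) (Ne.symm hpx))).ne' (by rw [← h]; simp)
    rw [hrow, ← h, hpx]; ring


theorem concatenation_prior_hackable {d d' d'' : ℕ}
    (E₁ : Matrix (Fin d'') (Fin d) ℝ) (E₂ : Matrix (Fin d') (Fin d'') ℝ)
    (hE₁ : ColStochastic E₁) (hE₂ : ColStochastic E₂)
    (hE₁pos : ∀ z x, 0 < E₁ z x) (hE₂pos : ∀ y z, 0 < E₂ y z) :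
    (∀ y x, 0 < (E₂ * E₁) y x) ∧
    (∀ (p : Fin d → ℝ) (q : Fin d' → ℝ), ProbVec p → ProbVec q →
      ∃ γ : Fin d → ℝ, ProbVec γ ∧ (∀ y, 0 < ((E₂ * E₁) *ᵥ γ) y) ∧
        (bayesMap (E₂ * E₁) γ) *ᵥ q = p) := by
  have hpos : ∀ y x, 0 < (E₂ * E₁) y x := by
    intro y x
    have hd'' : 0 < d'' := by
      by_contra h
      push_neg at h
      interval_cases d''
      have := hE₁.2 x
      simp at this
    rw [Matrix.mul_apply]
    apply Finset.sum_pos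
    · exact fun z _ => mul_pos (hE₂pos y z) (hE₁pos z x)
    · exact Finset.univ_nonempty_iff.mpr ⟨⟨0, hd''⟩⟩
  refine ⟨hpos, fun p q hp hq => ?_⟩
  have hcs : ColStochastic (E₂ * E₁) := by
    constructor
    · exact fun y x => (hpos y x).le
    · intro x
      have : ∑ y, (E₂ * E₁) y x = ∑ z, (∑ y, E₂ y z) * E₁ z x := by
        simp only [Matrix.mul_apply]
        rw [Finset.sum_comm]
        exact Finset.sum_congr rfl fun z _ => by rw [Finset.sum_mul]
      rw [this]
      have h2 : ∀ z, (∑ y, E₂ y z) * E₁ z x = E₁ z x := by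
        intro z; rw [hE₂.2 z, one_mul]
      rw [Finset.sum_congr rfl (fun z _ => h2 z), hE₁.2 x]
  exact key (E₂ * E₁) hcs hpos p q hp hq
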